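/- Let w = u a be a nonempty area sequence with u its prefix obtained by removing the last letter a. Then deleting from ψ(w) the letter at position i_0(ψ(w)) (the leftmost letter equal to the maximum value of ψ(w) in the rightmost block of consecutive maximal letters) yields exactly ψ(u). -/

import Mathlib

/-- The `i`-th letter of the word `w` (`1`-indexed, as in the paper);
defaults to `0` out of range. -/
def get1 (w : List ℕ) (i : ℕ) : ℕ := w.getD (i - 1) 0

/-- `w` is the area sequence of a Dyck path: the first letter is `0` and each
letter exceeds the previous one by at most one. -/
def IsAreaSeq (w : List ℕ) : Prop :=
  (w ≠ [] → get1 w 1 = 0) ∧ ∀ i, 1 ≤ i → i < w.length → get1 w (i + 1) ≤ get1 w i + 1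

/-- Insertion at position `i` (for `0 ≤ i ≤ n`): `ins w 0` prepends a `0`, and
for `1 ≤ i ≤ n`, `ins w i` inserts the letter `w_i + 1` just after position `i`. -/
def ins (w : List ℕ) (i : ℕ) : List ℕ :=
  w.take i ++ (if i = 0 then 0 else get1 w i + 1) :: w.drop i

/-- The area statistic: the sum of the letters. -/
def area (w : List ℕ) : ℕ := w.sum

/-- The dinv statistic: `dinv w = Σ_i d_i` where `d_i` is the number of `j > i`
with `w_j = w_i` or `w_j = w_i - 1`. -/
def dinv (w : List ℕ) : ℕ :=
  ∑ i ∈ Finset.Icc 1 w.length,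
    ((Finset.Ioc i w.length).filter
      (fun j => get1 w j = get1 w i ∨ get1 w j + 1 = get1 w i)).card

/-- The maximal value of a word (`0` for the empty word). -/
def maxVal (w : List ℕ) : ℕ := w.foldr max 0

/-- Positions of the letters of maximal value `m`. -/
def Maxb (w : List ℕ) : Finset ℕ :=
  (Finset.Icc 1 w.length).filter (fun i => get1 w i = maxVal w)

/-- Positions `i` with `w_i = m - 1` such that all letters after position `i`
are `< m`. -/
def Maxa (w : List ℕ) : Finset ℕ :=
  (Finset.Icc 1 w.length).filter (fun i =>
    get1 w i + 1 = maxVal w ∧ ∀ j ∈ Finset.Ioc i w.length, get1 w j < maxVal w)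

/-- The position of the leftmost letter equal to the maximal value `m` in the
rightmost block of consecutive letters equal to `m`. -/
def i0 (w : List ℕ) : ℕ :=
  ((Finset.Icc 1 w.length).filter (fun i =>
    get1 w i = maxVal w ∧ (i = 1 ∨ get1 w (i - 1) ≠ maxVal w))).sup id

/-- The admissible insertion positions of `w`, listed in admissible order:
the elements of `Maxb w` in decreasing order, then the elements of `Maxa w`
in decreasing order, then `i0 w - 1`.  The empty word has the single
admissible insertion position `0`. -/
def admissible (w : List ℕ) : List ℕ :=
  if w = [] then [0]
  else ((Maxb w).sort (· ≤ ·)).reverse ++ ((Maxa w).sort (· ≤ ·)).reverse ++ [i0 w - 1]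

/-- Auxiliary version of the map `ψ`, reading the reversed word. -/
def psiRev : List ℕ → List ℕ
  | [] => []
  | a :: u => ins (psiRev u) ((admissible (psiRev u)).getD a 0)

/-- The map `ψ`: `ψ(ε) = ε` and `ψ(u a) = ins_{c_a}(ψ(u))` where
`c_0, c_1, …, c_k` are the admissible insertion positions of `ψ(u)` in
admissible order. -/
def psi (w : List ℕ) : List ℕ := psiRev w.reverse

/-- The bounce sequence: `b_1 = 0`, and `b_i = b_{i-1} + 1` if
`b_{i-1} + 1 ≤ w_i`, otherwise `b_i = 0`. -/
def bseq (w : List ℕ) : ℕ → ℕ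
  | 0 => 0
  | 1 => 0
  | (i + 2) => if bseq w (i + 1) + 1 ≤ get1 w (i + 2) then bseq w (i + 1) + 1 else 0

/-- The bounces of `w`: positions `1 < i ≤ n` with `b_i = 0`. -/
def bounces (w : List ℕ) : Finset ℕ :=
  (Finset.Icc 2 w.length).filter (fun i => bseq w i = 0)

/-- The bounce statistic: the sum of the reversed positions `n - i + 1` of the
bounces of `w`. -/
def bounce (w : List ℕ) : ℕ := ∑ i ∈ bounces w, (w.length - i + 1)

def insVal (w : List ℕ) (c : ℕ) : ℕ := if c = 0 then 0 else get1 w c + 1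

lemma ins_def (w : List ℕ) (c : ℕ) : ins w c = w.take c ++ insVal w c :: w.drop c := rfl

lemma length_ins (w : List ℕ) (c : ℕ) (hc : c ≤ w.length) :
    (ins w c).length = w.length + 1 := by
  simp [ins_def]; omega

lemma getD_drop (w : List ℕ) (c j : ℕ) : (w.drop c).getD j 0 = w.getD (c + j) 0 := by
  by_cases h : c + j < w.length
  · rw [List.getD_eq_getElem _ _ (by simp; omega), List.getD_eq_getElem _ _ h, List.getElem_drop]
  · rw [List.getD_eq_default _ _ (by simp; omega), List.getD_eq_default _ _ (by omega)]

lemma get1_ins_le (w : List ℕ) (c i : ℕ) (hc : c ≤ w.length) (h1 : 1 ≤ i) (hi : i ≤ c) :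
    get1 (ins w c) i = get1 w i := by
  unfold get1
  rw [ins_def, List.getD_append _ _ _ _ ?_, List.getD_eq_getElem _ _ ?_,
    List.getD_eq_getElem _ _ (by omega), List.getElem_take]
  · simp; omega
  · simp; omega

lemma get1_ins_self (w : List ℕ) (c : ℕ) (hc : c ≤ w.length) :
    get1 (ins w c) (c + 1) = insVal w c := by
  unfold get1
  rw [ins_def, List.getD_append_right _ _ _ _ (by simp)]
  simp [List.length_take, Nat.min_eq_left hc]

lemma get1_ins_gt (w : List ℕ) (c i : ℕ) (hc : c ≤ w.length) (hi : c + 2 ≤ i) :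
    get1 (ins w c) i = get1 w (i - 1) := by
  unfold get1
  rw [ins_def, List.getD_append_right _ _ _ _ (by simp; omega)]
  have h2 : i - 1 - (w.take c).length = (i - 2 - c) + 1 := by simp; omega
  rw [h2, List.getD_cons_succ, getD_drop]
  congr 1
  omega

lemma mem_ins_iff (w : List ℕ) (c : ℕ) (y : ℕ) :
    y ∈ ins w c ↔ y = insVal w c ∨ y ∈ w := by
  rw [ins_def]
  constructor
  · intro h
    rcases List.mem_append.1 h with h | h
    · exact Or.inr (List.mem_of_mem_take h)
    · rcases List.mem_cons.1 h with h | h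
      · exact Or.inl h
      · exact Or.inr (List.mem_of_mem_drop h)
  · intro h
    rcases h with h | h
    · exact List.mem_append.2 (Or.inr (List.mem_cons.2 (Or.inl h)))
    · rcases List.mem_append.1 ((List.take_append_drop c w).symm ▸ h) with h | h
      · exact List.mem_append.2 (Or.inl h)
      · exact List.mem_append.2 (Or.inr (List.mem_cons.2 (Or.inr h)))

lemma eraseIdx_ins (w : List ℕ) (c : ℕ) (hc : c ≤ w.length) :
    (ins w c).eraseIdx c = w := by
  rw [ins_def, List.eraseIdx_append_of_length_le (by simp), ]
  simp [Nat.min_eq_left hc, List.take_append_drop]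

lemma le_maxVal (w : List ℕ) (y : ℕ) (hy : y ∈ w) : y ≤ maxVal w := by
  induction w with
  | nil => simp at hy
  | cons b t ih =>
    rcases List.mem_cons.1 hy with h | h
    · simp [maxVal, List.foldr, h]
    · have := ih h
      simp only [maxVal, List.foldr] at *
      omega

lemma maxVal_le (w : List ℕ) (x : ℕ) (hx : ∀ y ∈ w, y ≤ x) : maxVal w ≤ x := by
  induction w with
  | nil => simp [maxVal]
  | cons b t ih =>
    simp only [maxVal, List.foldr] at *
    have h1 := hx b (by simp)
    have h2 := ih (fun y hy => hx y (by simp [hy]))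
    omega

lemma maxVal_mem (w : List ℕ) (hw : w ≠ []) : maxVal w ∈ w := by
  induction w with
  | nil => simp at hw
  | cons b t ih =>
    by_cases ht : t = []
    · subst ht; simp [maxVal]
    · have h := ih ht
      simp only [maxVal, List.foldr] at *
      rcases Nat.le_total b (t.foldr max 0) with h' | h'
      · rw [Nat.max_eq_right h']; exact List.mem_cons.2 (Or.inr h)
      · rw [Nat.max_eq_left h']; exact List.mem_cons.2 (Or.inl rfl)

lemma get1_le_maxVal (w : List ℕ) (i : ℕ) : get1 w i ≤ maxVal w := by
  by_cases h : i - 1 < w.length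
  · exact le_maxVal _ _ (by rw [get1, List.getD_eq_getElem _ _ h]; exact List.getElem_mem _)
  · rw [get1, List.getD_eq_default _ _ (by omega)]; exact Nat.zero_le _

lemma maxVal_eq_of (w : List ℕ) (x : ℕ) (hx : ∀ y ∈ w, y ≤ x) (hm : x ∈ w) :
    maxVal w = x :=
  le_antisymm (maxVal_le w x hx) (le_maxVal w x hm)

lemma exists_get1_maxVal (w : List ℕ) (hw : w ≠ []) :
    ∃ i, 1 ≤ i ∧ i ≤ w.length ∧ get1 w i = maxVal w := by
  have h := maxVal_mem w hw
  rw [List.mem_iff_getElem] at h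
  obtain ⟨k, hk, hkeq⟩ := h
  exact ⟨k + 1, by omega, by omega, by rw [get1, Nat.add_sub_cancel, List.getD_eq_getElem _ _ hk, hkeq]⟩

lemma maxVal_ins (w : List ℕ) (c : ℕ) (hx : maxVal w ≤ insVal w c) :
    maxVal (ins w c) = insVal w c := by
  apply maxVal_eq_of
  · intro y hy
    rcases (mem_ins_iff w c y).1 hy with h | h
    · omega
    · exact le_trans (le_maxVal w y h) hx
  · exact (mem_ins_iff w c _).2 (Or.inl rfl)

/-- The block-start position set whose sup is `i0`. -/
def Fset (w : List ℕ) : Finset ℕ :=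
  (Finset.Icc 1 w.length).filter (fun i =>
    get1 w i = maxVal w ∧ (i = 1 ∨ get1 w (i - 1) ≠ maxVal w))

lemma i0_eq_sup (w : List ℕ) : i0 w = (Fset w).sup id := rfl

lemma mem_Fset (w : List ℕ) (i : ℕ) :
    i ∈ Fset w ↔ 1 ≤ i ∧ i ≤ w.length ∧ get1 w i = maxVal w ∧
      (i = 1 ∨ get1 w (i - 1) ≠ maxVal w) := by
  simp [Fset, Finset.mem_filter, Finset.mem_Icc, and_assoc]

lemma i0_le_length (w : List ℕ) : i0 w ≤ w.length := by
  rw [i0_eq_sup]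
  exact Finset.sup_le (fun j hj => ((mem_Fset w j).1 hj).2.1)

lemma le_i0 (w : List ℕ) (j : ℕ) (hj : j ∈ Fset w) : j ≤ i0 w := by
  rw [i0_eq_sup]; exact Finset.le_sup (f := id) hj

lemma i0_mem_Fset (w : List ℕ) (hw : w ≠ []) : i0 w ∈ Fset w := by
  have hne : (Fset w).Nonempty := by
    obtain ⟨i, h1, h2, h3⟩ := exists_get1_maxVal w hw
    -- take the least position attaining the max
    set S := (Finset.Icc 1 w.length).filter (fun i => get1 w i = maxVal w) with hS
    have hSne : S.Nonempty := ⟨i, by simp [hS, Finset.mem_filter, Finset.mem_Icc]; omega⟩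
    have hmin := S.min'_mem hSne
    set j := S.min' hSne with hj
    simp only [hS, Finset.mem_filter, Finset.mem_Icc] at hmin
    refine ⟨j, (mem_Fset w j).2 ⟨hmin.1.1, hmin.1.2, hmin.2, ?_⟩⟩
    by_cases hj1 : j = 1
    · exact Or.inl hj1
    · refine Or.inr (fun hcon => ?_)
      have : j - 1 ∈ S := by
        simp [hS, Finset.mem_filter, Finset.mem_Icc]
        exact ⟨⟨by omega, by omega⟩, hcon⟩
      have := S.min'_le _ this
      omega
  obtain ⟨b, hb, hball⟩ := Finset.exists_max_image (Fset w) id hne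
  have : (Fset w).sup id = b :=
    le_antisymm (Finset.sup_le hball) (Finset.le_sup (f := id) hb)
  rw [i0_eq_sup, this]; exact hb

/-- The unified key lemma: under the two conditions, inserting at `c` creates
the leftmost-max-of-rightmost-block at position `c+1`. -/
lemma i0_ins (w : List ℕ) (c : ℕ) (hc : c ≤ w.length)
    (hx : maxVal w ≤ insVal w c)
    (hK : ∀ j, c + 2 ≤ j → j ≤ w.length → get1 w j = insVal w c →
      get1 w (j - 1) = insVal w c) :
    i0 (ins w c) = c + 1 := by
  have hM := maxVal_ins w c hx
  have hlen := length_ins w c hc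
  have hmem : c + 1 ∈ Fset (ins w c) := by
    rw [mem_Fset]
    refine ⟨by omega, by omega, by rw [get1_ins_self w c hc, hM], ?_⟩
    by_cases h0 : c = 0
    · exact Or.inl (by omega)
    · refine Or.inr ?_
      have : get1 (ins w c) (c + 1 - 1) = get1 w c := by
        rw [Nat.add_sub_cancel]; exact get1_ins_le w c c hc (by omega) le_rfl
      rw [this, hM, insVal, if_neg h0]
      omega
  have hmax : ∀ j ∈ Fset (ins w c), j ≤ c + 1 := by
    intro j hj
    rw [mem_Fset] at hj
    obtain ⟨hj1, hj2, hj3, hj4⟩ := hj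
    by_contra hcon
    push_neg at hcon
    have hj5 : c + 2 ≤ j := by omega
    have hgj : get1 w (j - 1) = insVal w c := by
      rw [← get1_ins_gt w c j hc hj5, hj3, hM]
    rcases hj4 with h | h
    · omega
    · rw [hM] at h
      by_cases hje : j - 1 = c + 1
      · rw [hje, get1_ins_self w c hc] at h
        exact h rfl
      · have hj6 : c + 2 ≤ j - 1 := by omega
        rw [get1_ins_gt w c (j - 1) hc hj6] at h
        exact h (hK (j - 1) hj6 (by omega) hgj)
  rw [i0_eq_sup]
  exact le_antisymm (Finset.sup_le (fun j hj => hmax j hj)) (Finset.le_sup (f := id) hmem)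

lemma isAreaSeq_ins (w : List ℕ) (c : ℕ) (hw : IsAreaSeq w) (hc : c ≤ w.length) :
    IsAreaSeq (ins w c) := by
  have hlen := length_ins w c hc
  constructor
  · intro _
    by_cases h0 : c = 0
    · subst h0
      have := get1_ins_self w 0 hc
      simpa [insVal] using this
    · rw [get1_ins_le w c 1 hc le_rfl (by omega)]
      exact hw.1 (by intro h; rw [h] at hc; simp at hc; omega)
  · intro i hi1 hi2
    rw [hlen] at hi2
    have hi3 : i ≤ w.length := by omega
    rcases Nat.lt_trichotomy (i + 1) (c + 1) with h | h | h
    · -- i + 1 ≤ c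
      rw [get1_ins_le w c (i + 1) hc (by omega) (by omega),
        get1_ins_le w c i hc hi1 (by omega)]
      exact hw.2 i hi1 (by omega)
    · -- i = c
      have hic : i = c := by omega
      subst hic
      rw [get1_ins_self w i hc, get1_ins_le w i i hc hi1 le_rfl, insVal,
        if_neg (by omega)]
    · rcases Nat.lt_trichotomy i (c + 1) with h' | h' | h'
      · omega
      · -- i = c + 1
        rw [h', get1_ins_self w c hc, get1_ins_gt w c (c + 2) hc le_rfl]
        have : c + 2 - 1 = c + 1 := by omega
        rw [this]
        by_cases h0 : c = 0
        · subst h0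
          have h1 : insVal w 0 = 0 := rfl
          have h2 := hw.1 (by intro hnil; rw [hnil] at hi3; simp at hi3; omega)
          rw [h1]
          have h3 : (0:ℕ) + 1 = 1 := rfl
          rw [h3]
          omega
        · rw [insVal, if_neg h0]
          by_cases hcl : c < w.length
          · have := hw.2 c (by omega) hcl
            omega
          · rw [get1, List.getD_eq_default _ _ (by omega)]
            omega
      · -- i ≥ c + 2
        rw [get1_ins_gt w c (i + 1) hc (by omega), get1_ins_gt w c i hc h']
        have h1 : i + 1 - 1 = (i - 1) + 1 := by omega
        rw [h1]
        exact hw.2 (i - 1) (by omega) (by omega)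

lemma mem_Maxb (w : List ℕ) (i : ℕ) :
    i ∈ Maxb w ↔ 1 ≤ i ∧ i ≤ w.length ∧ get1 w i = maxVal w := by
  simp [Maxb, Finset.mem_filter, Finset.mem_Icc, and_assoc]

lemma mem_Maxa (w : List ℕ) (i : ℕ) :
    i ∈ Maxa w ↔ 1 ≤ i ∧ i ≤ w.length ∧ get1 w i + 1 = maxVal w ∧
      ∀ j, i < j → j ≤ w.length → get1 w j < maxVal w := by
  simp [Maxa, Finset.mem_filter, Finset.mem_Icc, Finset.mem_Ioc, and_assoc]

/-- The `a`-th element (0-indexed) of the decreasing sort of a finset `s` of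
naturals is a member of `s` with exactly `a` elements above it. -/
lemma sorted_rev_getD (s : Finset ℕ) (a : ℕ) (ha : a < s.card) :
    ((s.sort (· ≤ ·)).reverse.getD a 0) ∈ s ∧
    (s.filter (fun p => (s.sort (· ≤ ·)).reverse.getD a 0 < p)).card = a := by
  set L := s.sort (· ≤ ·) with hL
  have hlen : L.length = s.card := Finset.length_sort _
  have hpw : ∀ i j, (hi : i < L.length) → (hj : j < L.length) → i < j → L[i] < L[j] := by
    have := (Finset.sortedLT_sort s).pairwise
    rw [List.pairwise_iff_getElem] at this
    exact fun i j hi hj hij => this i j hi hj hij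
  set b := s.card - 1 - a with hb
  have hbl : b < L.length := by omega
  have hcd : L.reverse.getD a 0 = L[b] := by
    rw [List.getD_eq_getElem _ _ (by simp [hlen]; omega), List.getElem_reverse]
    congr 1
    omega
  have hmem : L[b] ∈ s := (Finset.mem_sort (α := ℕ) (· ≤ ·)).1 (List.getElem_mem hbl)
  rw [hcd]
  refine ⟨hmem, ?_⟩
  have himg : s.filter (fun p => L[b] < p) =
      (Finset.Ico (b + 1) L.length).image (fun i => L.getD i 0) := by
    ext p
    simp only [Finset.mem_filter, Finset.mem_image, Finset.mem_Ico]
    constructor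
    · rintro ⟨hps, hpb⟩
      have hpL : p ∈ L := (Finset.mem_sort (α := ℕ) (· ≤ ·)).2 hps
      rw [List.mem_iff_getElem] at hpL
      obtain ⟨i, hi, hieq⟩ := hpL
      refine ⟨i, ⟨?_, hi⟩, by rw [List.getD_eq_getElem _ _ hi, hieq]⟩
      by_contra hcon
      push_neg at hcon
      rcases Nat.lt_or_ge i b with h | h
      · have := hpw i b hi hbl h; omega
      · have : i = b := by omega
        subst this; omega
    · rintro ⟨i, ⟨hi1, hi2⟩, hieq⟩
      rw [List.getD_eq_getElem _ _ hi2] at hieq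
      subst hieq
      exact ⟨(Finset.mem_sort (α := ℕ) (· ≤ ·)).1 (List.getElem_mem hi2),
        hpw b i hbl hi2 (by omega)⟩
  rw [himg, Finset.card_image_of_injOn, Nat.card_Ico]
  · omega
  · intro i hi j hj hij
    simp only [Finset.coe_Ico, Set.mem_Ico] at hi hj
    replace hij : L.getD i 0 = L.getD j 0 := hij
    rw [List.getD_eq_getElem _ _ hi.2, List.getD_eq_getElem _ _ hj.2] at hij
    by_contra hcon
    rcases Nat.lt_or_ge i j with h | h
    · have := hpw i j hi.2 hj.2 h; omega
    · have := hpw j i hj.2 hi.2 (by omega); omega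

lemma admissible_cases (w : List ℕ) (hw : w ≠ []) (a : ℕ)
    (ha : a ≤ (Maxb w).card + (Maxa w).card) :
    ((admissible w).getD a 0 ∈ Maxb w ∧
        ((Maxb w).filter (fun p => (admissible w).getD a 0 < p)).card = a) ∨
    ((admissible w).getD a 0 ∈ Maxa w ∧
        (Maxb w).card + ((Maxa w).filter (fun p => (admissible w).getD a 0 < p)).card = a) ∨
    ((admissible w).getD a 0 = i0 w - 1 ∧ a = (Maxb w).card + (Maxa w).card) := by
  have hadm : admissible w = ((Maxb w).sort (· ≤ ·)).reverse ++
      (((Maxa w).sort (· ≤ ·)).reverse ++ [i0 w - 1]) := by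
    rw [admissible, if_neg hw, List.append_assoc]
  have hlb : (((Maxb w).sort (· ≤ ·)).reverse).length = (Maxb w).card := by
    simp [Finset.length_sort]
  have hla : (((Maxa w).sort (· ≤ ·)).reverse).length = (Maxa w).card := by
    simp [Finset.length_sort]
  rcases Nat.lt_or_ge a (Maxb w).card with h | h
  · left
    have : (admissible w).getD a 0 = ((Maxb w).sort (· ≤ ·)).reverse.getD a 0 := by
      rw [hadm, List.getD_append _ _ _ _ (by omega)]
    rw [this]
    exact sorted_rev_getD (Maxb w) a h
  · rcases Nat.lt_or_ge a ((Maxb w).card + (Maxa w).card) with h2 | h2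
    · right; left
      have : (admissible w).getD a 0 =
          ((Maxa w).sort (· ≤ ·)).reverse.getD (a - (Maxb w).card) 0 := by
        rw [hadm, List.getD_append_right _ _ _ _ (by omega), hlb,
          List.getD_append _ _ _ _ (by omega)]
      rw [this]
      obtain ⟨hm, hc⟩ := sorted_rev_getD (Maxa w) (a - (Maxb w).card) (by omega)
      exact ⟨hm, by omega⟩
    · right; right
      have hae : a = (Maxb w).card + (Maxa w).card := by omega
      refine ⟨?_, hae⟩
      rw [hadm, List.getD_append_right _ _ _ _ (by omega), hlb,
        List.getD_append_right _ _ _ _ (by omega), hla]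
      simp [hae]

lemma case_Maxb (w : List ℕ) (c : ℕ) (hm : c ∈ Maxb w) :
    c ≤ w.length ∧ i0 (ins w c) = c + 1 ∧
    ((Maxb w).filter (fun p => c < p)).card + 1 ≤
      (Maxb (ins w c)).card + (Maxa (ins w c)).card := by
  rw [mem_Maxb] at hm
  obtain ⟨hc1, hc2, hc3⟩ := hm
  set m := maxVal w with hmv
  have hiv : insVal w c = m + 1 := by rw [insVal, if_neg (by omega), hc3]
  have hx : maxVal w ≤ insVal w c := by omega
  have hK : ∀ j, c + 2 ≤ j → j ≤ w.length → get1 w j = insVal w c →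
      get1 w (j - 1) = insVal w c := by
    intro j _ _ hj
    have := get1_le_maxVal w j
    omega
  have hi0 := i0_ins w c hc2 hx hK
  have hM := maxVal_ins w c hx
  have hlen := length_ins w c hc2
  refine ⟨hc2, hi0, ?_⟩
  have hB : 1 ≤ (Maxb (ins w c)).card := by
    refine Finset.card_pos.2 ⟨c + 1, (mem_Maxb _ _).2 ⟨by omega, by omega, ?_⟩⟩
    rw [get1_ins_self w c hc2, hM]
  have hA : ((Maxb w).filter (fun p => c < p)).card ≤ (Maxa (ins w c)).card := by
    apply Finset.card_le_card_of_injOn (fun p => p + 1)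
    · intro p hp
      simp only [Finset.mem_coe, Finset.mem_filter, mem_Maxb] at hp
      obtain ⟨⟨hp1, hp2, hp3⟩, hp4⟩ := hp
      simp only [Finset.mem_coe]
      rw [mem_Maxa]
      refine ⟨by omega, by omega, ?_, ?_⟩
      · rw [get1_ins_gt w c (p + 1) hc2 (by omega), Nat.add_sub_cancel, hp3, hM, hiv]
      · intro j hj1 hj2
        rw [get1_ins_gt w c j hc2 (by omega), hM, hiv]
        have := get1_le_maxVal w (j - 1)
        omega
    · intro p _ q _ h
      simpa using h
  omega

lemma case_Maxa (w : List ℕ) (c : ℕ) (hm : c ∈ Maxa w) :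
    c ≤ w.length ∧ i0 (ins w c) = c + 1 ∧
    (Maxb w).card + ((Maxa w).filter (fun p => c < p)).card + 1 ≤
      (Maxb (ins w c)).card + (Maxa (ins w c)).card := by
  rw [mem_Maxa] at hm
  obtain ⟨hc1, hc2, hc3, htail⟩ := hm
  set m := maxVal w with hmv
  have hiv : insVal w c = m := by rw [insVal, if_neg (by omega), hc3]
  have hx : maxVal w ≤ insVal w c := by omega
  have hK : ∀ j, c + 2 ≤ j → j ≤ w.length → get1 w j = insVal w c →
      get1 w (j - 1) = insVal w c := by
    intro j hj1 hj2 hj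
    have := htail j (by omega) hj2
    omega
  have hi0 := i0_ins w c hc2 hx hK
  have hM := maxVal_ins w c hx
  have hlen := length_ins w c hc2
  refine ⟨hc2, hi0, ?_⟩
  have hsub : insert (c + 1) (Maxb w) ⊆ Maxb (ins w c) := by
    intro p hp
    rcases Finset.mem_insert.1 hp with h | h
    · subst h
      exact (mem_Maxb _ _).2 ⟨by omega, by omega, by rw [get1_ins_self w c hc2, hM]⟩
    · rw [mem_Maxb] at h
      obtain ⟨hp1, hp2, hp3⟩ := h
      have hpc : p ≤ c := by
        by_contra hcon
        have := htail p (by omega) hp2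
        omega
      exact (mem_Maxb _ _).2 ⟨hp1, by omega,
        by rw [get1_ins_le w c p hc2 hp1 hpc, hp3, hM, hiv]⟩
  have hnm : c + 1 ∉ Maxb w := by
    rw [mem_Maxb]
    rintro ⟨_, h2, h3⟩
    have := htail (c + 1) (by omega) h2
    omega
  have hB : (Maxb w).card + 1 ≤ (Maxb (ins w c)).card := by
    have := Finset.card_le_card hsub
    rw [Finset.card_insert_of_notMem hnm] at this
    omega
  have hA : ((Maxa w).filter (fun p => c < p)).card ≤ (Maxa (ins w c)).card := by
    apply Finset.card_le_card_of_injOn (fun p => p + 1)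
    · intro p hp
      simp only [Finset.mem_coe, Finset.mem_filter, mem_Maxa] at hp
      obtain ⟨⟨hp1, hp2, hp3, hp4⟩, hp5⟩ := hp
      simp only [Finset.mem_coe]
      rw [mem_Maxa]
      refine ⟨by omega, by omega, ?_, ?_⟩
      · rw [get1_ins_gt w c (p + 1) hc2 (by omega), Nat.add_sub_cancel, hp3, hM, hiv]
      · intro j hj1 hj2
        rw [get1_ins_gt w c j hc2 (by omega), hM, hiv]
        exact hp4 (j - 1) (by omega) (by omega)
    · intro p _ q _ h
      simpa using h
  omega

lemma case_i0 (w : List ℕ) (hw : IsAreaSeq w) (hne : w ≠ []) :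
    i0 w - 1 ≤ w.length ∧ i0 (ins w (i0 w - 1)) = i0 w - 1 + 1 ∧
    (Maxb w).card + (Maxa w).card + 1 ≤
      (Maxb (ins w (i0 w - 1))).card + (Maxa (ins w (i0 w - 1))).card := by
  set m := maxVal w with hmv
  set c := i0 w - 1 with hcdef
  have hF := (mem_Fset w (i0 w)).1 (i0_mem_Fset w hne)
  obtain ⟨hF1, hF2, hF3, hF4⟩ := hF
  have hnl : 1 ≤ w.length := by omega
  have hc2 : c ≤ w.length := by omega
  have hveq : insVal w c = m := by
    by_cases h1 : i0 w = 1
    · have hc0 : c = 0 := by omega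
      have hm0 : m = 0 := by
        have := hw.1 hne
        rw [h1] at hF3
        omega
      rw [hc0, hm0]; rfl
    · have hne4 : get1 w c ≠ m := by
        rcases hF4 with h | h
        · omega
        · exact h
      have harea := hw.2 c (by omega) (by omega)
      have hci : c + 1 = i0 w := by omega
      rw [hci, hF3] at harea
      have := get1_le_maxVal w c
      rw [insVal, if_neg (by omega)]
      omega
  have hx : maxVal w ≤ insVal w c := by omega
  have hK : ∀ j, c + 2 ≤ j → j ≤ w.length → get1 w j = insVal w c →
      get1 w (j - 1) = insVal w c := by
    intro j hj1 hj2 hj3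
    by_contra hcon
    have : j ∈ Fset w := (mem_Fset w j).2 ⟨by omega, hj2, by omega,
      Or.inr (by rw [← hmv, ← hveq]; exact hcon)⟩
    have := le_i0 w j this
    omega
  have hi0 := i0_ins w c hc2 hx hK
  have hM := maxVal_ins w c hx
  have hlen := length_ins w c hc2
  refine ⟨hc2, hi0, ?_⟩
  -- Maxb bound
  have himg : insert (c + 1) ((Maxb w).image (fun p => if p ≤ c then p else p + 1)) ⊆
      Maxb (ins w c) := by
    intro q hq
    rcases Finset.mem_insert.1 hq with h | h
    · subst h
      exact (mem_Maxb _ _).2 ⟨by omega, by omega, by rw [get1_ins_self w c hc2, hM, hveq]⟩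
    · rw [Finset.mem_image] at h
      obtain ⟨p, hp, hpeq⟩ := h
      rw [mem_Maxb] at hp
      obtain ⟨hp1, hp2, hp3⟩ := hp
      by_cases hpc : p ≤ c
      · rw [if_pos hpc] at hpeq
        subst hpeq
        exact (mem_Maxb _ _).2 ⟨hp1, by omega,
          by rw [get1_ins_le w c p hc2 hp1 hpc, hp3, hM, hveq]⟩
      · rw [if_neg hpc] at hpeq
        subst hpeq
        exact (mem_Maxb _ _).2 ⟨by omega, by omega,
          by rw [get1_ins_gt w c (p + 1) hc2 (by omega), Nat.add_sub_cancel, hp3, hM, hveq]⟩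
  have hninsert : c + 1 ∉ (Maxb w).image (fun p => if p ≤ c then p else p + 1) := by
    rw [Finset.mem_image]
    rintro ⟨p, hp, hpeq⟩
    rw [mem_Maxb] at hp
    by_cases hpc : p ≤ c
    · rw [if_pos hpc] at hpeq; omega
    · rw [if_neg hpc] at hpeq; omega
  have hinj : Set.InjOn (fun p => if p ≤ c then p else p + 1) (Maxb w) := by
    intro p hp q hq hpq
    simp only at hpq
    by_cases h1 : p ≤ c <;> by_cases h2 : q ≤ c <;>
      simp [h1, h2] at hpq <;> omega
  have hB : (Maxb w).card + 1 ≤ (Maxb (ins w c)).card := by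
    have h1 := Finset.card_le_card himg
    rw [Finset.card_insert_of_notMem hninsert, Finset.card_image_of_injOn hinj] at h1
    omega
  have hA : (Maxa w).card ≤ (Maxa (ins w c)).card := by
    apply Finset.card_le_card_of_injOn (fun p => p + 1)
    · intro p hp
      rw [Finset.mem_coe, mem_Maxa] at hp
      obtain ⟨hp1, hp2, hp3, hp4⟩ := hp
      have hpi : i0 w ≤ p := by
        by_contra hcon
        have := hp4 (i0 w) (by omega) hF2
        omega
      simp only [Finset.mem_coe]
      rw [mem_Maxa]
      refine ⟨by omega, by omega, ?_, ?_⟩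
      · rw [get1_ins_gt w c (p + 1) hc2 (by omega), Nat.add_sub_cancel, hp3, hM, hveq]
      · intro j hj1 hj2
        rw [get1_ins_gt w c j hc2 (by omega), hM, hveq]
        exact hp4 (j - 1) (by omega) (by omega)
    · intro p _ q _ h
      simpa using h
  omega

lemma isAreaSeq_dropLast (u : List ℕ) (a : ℕ) (h : IsAreaSeq (u ++ [a])) :
    IsAreaSeq u := by
  constructor
  · intro hu
    have hul : 0 < u.length := List.length_pos_iff.2 hu
    have h1 := h.1 (by simp)
    rw [get1, List.getD_append _ _ _ _ (by omega)] at h1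
    exact h1
  · intro i hi1 hi2
    have h2 := h.2 i hi1 (by simp; omega)
    rw [get1, get1, List.getD_append _ _ _ _ (by omega),
      List.getD_append _ _ _ _ (by omega)] at h2
    exact h2

lemma reverse_headD (u : List ℕ) (hu : u ≠ []) :
    u.reverse.headD 0 = u.getD (u.length - 1) 0 := by
  have h2 : 0 < u.reverse.length := by simp [List.length_pos_iff, hu]
  have e : u.reverse.headD 0 = u.reverse.getD 0 0 := by
    cases hrv : u.reverse with
    | nil => rw [hrv] at h2; simp at h2
    | cons b t => simp
  have h3 : 0 < u.length := by simpa using h2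
  rw [e, List.getD_eq_getElem _ _ h2, List.getElem_reverse,
    List.getD_eq_getElem _ _ (by omega)]
  congr 1

lemma last_letter (u : List ℕ) (a : ℕ) (h : IsAreaSeq (u ++ [a])) (hu : u ≠ []) :
    a ≤ u.reverse.headD 0 + 1 := by
  have hul : 0 < u.length := List.length_pos_iff.2 hu
  have h2 := h.2 u.length (by omega) (by simp)
  have e1 : get1 (u ++ [a]) (u.length + 1) = a := by
    rw [get1, Nat.add_sub_cancel, List.getD_append_right _ _ _ _ le_rfl]
    simp
  have e2 : get1 (u ++ [a]) u.length = u.reverse.headD 0 := by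
    rw [get1, List.getD_append _ _ _ _ (by omega), reverse_headD u hu]
  rw [e1, e2] at h2
  exact h2

lemma step (w : List ℕ) (hw : IsAreaSeq w) (a : ℕ)
    (ha0 : w = [] → a = 0)
    (ha1 : w ≠ [] → a ≤ (Maxb w).card + (Maxa w).card) :
    (admissible w).getD a 0 ≤ w.length ∧
    i0 (ins w ((admissible w).getD a 0)) = (admissible w).getD a 0 + 1 ∧
    IsAreaSeq (ins w ((admissible w).getD a 0)) ∧
    a + 1 ≤ (Maxb (ins w ((admissible w).getD a 0))).card +
      (Maxa (ins w ((admissible w).getD a 0))).card := by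
  by_cases hne : w = []
  · subst hne
    have ha : a = 0 := ha0 rfl
    subst ha
    have hadm : (admissible ([] : List ℕ)).getD 0 0 = 0 := rfl
    rw [hadm]
    have hins : ins ([] : List ℕ) 0 = [0] := rfl
    rw [hins]
    refine ⟨le_rfl, by decide, ⟨fun _ => rfl, fun i h1 h2 => by simp at h2; omega⟩, by decide⟩
  · have ha := ha1 hne
    rcases admissible_cases w hne a ha with ⟨hm, hcard⟩ | ⟨hm, hcard⟩ | ⟨heq, hae⟩
    · obtain ⟨h1, h2, h3⟩ := case_Maxb w _ hm
      exact ⟨h1, h2, isAreaSeq_ins w _ hw h1, by omega⟩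
    · obtain ⟨h1, h2, h3⟩ := case_Maxa w _ hm
      exact ⟨h1, h2, isAreaSeq_ins w _ hw h1, by omega⟩
    · rw [heq]
      obtain ⟨h1, h2, h3⟩ := case_i0 w hw hne
      exact ⟨h1, h2, isAreaSeq_ins w _ hw h1, by omega⟩

lemma psiRev_key (v : List ℕ) (hv : IsAreaSeq v.reverse) :
    IsAreaSeq (psiRev v) ∧ (psiRev v).length = v.length ∧
    (v ≠ [] → v.headD 0 + 1 ≤ (Maxb (psiRev v)).card + (Maxa (psiRev v)).card) := by
  induction v with
  | nil =>
    exact ⟨⟨fun h => absurd rfl h, fun i h1 h2 => by simp [psiRev] at h2⟩, rfl,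
      fun h => absurd rfl h⟩
  | cons a t ih =>
    have hrev : (a :: t).reverse = t.reverse ++ [a] := by simp
    rw [hrev] at hv
    have hvt : IsAreaSeq t.reverse := isAreaSeq_dropLast _ _ hv
    obtain ⟨ih1, ih2, ih3⟩ := ih hvt
    set w := psiRev t with hwdef
    have ha0 : w = [] → a = 0 := by
      intro h
      have ht : t = [] := by
        rw [h] at ih2
        simp at ih2
        exact List.length_eq_zero_iff.1 ih2.symm
      subst ht
      have := hv.1 (by simp)
      simpa [get1] using this
    have ha1 : w ≠ [] → a ≤ (Maxb w).card + (Maxa w).card := by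
      intro h
      have ht : t ≠ [] := by
        intro hh
        rw [hh] at ih2
        simp at ih2
        exact h ih2
      have h1 := ih3 ht
      have h2 : a ≤ t.headD 0 + 1 := by
        have h3 := last_letter t.reverse a hv (by simpa using ht)
        rwa [List.reverse_reverse] at h3
      omega
    obtain ⟨s1, s2, s3, s4⟩ := step w ih1 a ha0 ha1
    have hpsi : psiRev (a :: t) = ins w ((admissible w).getD a 0) := rfl
    rw [hpsi]
    refine ⟨s3, ?_, fun _ => ?_⟩
    · rw [length_ins _ _ s1, ih2]
      simp
    · simpa using s4

/-- For a nonempty area sequence `w = u a`, deleting from `ψ w` the letter at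
position `i0 (ψ w)` (the leftmost letter equal to the maximal value of `ψ w`
in the rightmost block of consecutive maximal letters) yields exactly `ψ u`. -/
theorem eraseIdx_i0_psi (u : List ℕ) (a : ℕ) (hw : IsAreaSeq (u ++ [a])) :
    (psi (u ++ [a])).eraseIdx (i0 (psi (u ++ [a])) - 1) = psi u := by
  have hrev : (u ++ [a]).reverse = a :: u.reverse := by simp
  have hpsi : psi (u ++ [a]) =
      ins (psiRev u.reverse) ((admissible (psiRev u.reverse)).getD a 0) := by
    rw [psi, hrev]
    rfl
  have hu : IsAreaSeq u := isAreaSeq_dropLast u a hw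
  have hv : IsAreaSeq u.reverse.reverse := by rwa [List.reverse_reverse]
  obtain ⟨k1, k2, k3⟩ := psiRev_key u.reverse hv
  set w := psiRev u.reverse with hwdef
  have ha0 : w = [] → a = 0 := by
    intro h
    have hune : u = [] := by
      rw [h] at k2
      simp at k2
      exact List.length_eq_zero_iff.1 k2.symm
    subst hune
    have := hw.1 (by simp)
    simpa [get1] using this
  have ha1 : w ≠ [] → a ≤ (Maxb w).card + (Maxa w).card := by
    intro h
    have hune : u ≠ [] := by
      intro hh
      rw [hh] at k2
      simp at k2
      exact h k2
    have h1 := k3 (by simpa using hune)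
    have h2 := last_letter u a hw hune
    have h3 : u.reverse.headD 0 = (u.reverse).headD 0 := rfl
    omega
  obtain ⟨s1, s2, s3, s4⟩ := step w k1 a ha0 ha1
  rw [hpsi, s2]
  have he : (admissible w).getD a 0 + 1 - 1 = (admissible w).getD a 0 := by omega
  rw [he, eraseIdx_ins w _ s1]
  exact hwdef
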